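/- In a toss-as-you-go game (reachability, parity, or energy objective) on a graph with n nodes, if both players play the optimal memoryless strategies constructed inductively over the number of unassigned nodes, then the first cycle closed in the play occurs within at most (n+1)(n+2)/2 steps; more precisely, if m nodes are unassigned at the start, a cycle is closed within Σ_{i=0}^{m} (n − i + 1) steps. -/

import Mathlib

open scoped Classical

/-- A state of the explicit game of a toss-as-you-go game: a partial ownership function
(`some true` = Max, `some false` = Min, `none` = unassigned) together with the current node. -/
abbrev TAYGState (V : Type) := (V → Option Bool) × V

/-- `TAYGPlay E σ τ p` : the sequence `p` is a play of the explicit game of the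
toss-as-you-go game on graph `E`, consistent with the memoryless strategies `σ` (for Max)
and `τ` (for Min): at a state whose current node is unassigned, a coin toss assigns it
(either outcome may occur); at a Max-owned (resp. Min-owned) node, the next node is chosen
by `σ` (resp. `τ`). -/
def TAYGPlay {V : Type} [DecidableEq V] (E : V → V → Prop)
    (σ τ : TAYGState V → V) (p : ℕ → TAYGState V) : Prop :=
  ∀ k,
    ((p k).1 (p k).2 = none ∧
      ∃ b : Bool, p (k + 1) = (Function.update (p k).1 (p k).2 (some b), (p k).2)) ∨
    ((p k).1 (p k).2 = some true ∧ p (k + 1) = ((p k).1, σ (p k))) ∨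
    ((p k).1 (p k).2 = some false ∧ p (k + 1) = ((p k).1, τ (p k)))

section Aux

variable {V : Type} [Fintype V] [DecidableEq V]
variable {E : V → V → Prop} {σ τ : TAYGState V → V} {p : ℕ → TAYGState V}

/-- Assignments persist for one step. -/
lemma TAYG.mono_step (hplay : TAYGPlay E σ τ p) (k : ℕ) (v : V) (b : Bool)
    (h : (p k).1 v = some b) : (p (k + 1)).1 v = some b := by
  rcases hplay k with ⟨hn, b', hb'⟩ | ⟨_, hb'⟩ | ⟨_, hb'⟩
  · rw [hb']
    by_cases hv : v = (p k).2
    · subst hv; rw [h] at hn; exact absurd hn (by simp)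
    · simp [Function.update_of_ne hv, h]
  · rw [hb']; exact h
  · rw [hb']; exact h

/-- Assignments persist. -/
lemma TAYG.mono (hplay : TAYGPlay E σ τ p) {k k' : ℕ} (hk : k ≤ k') (v : V) (b : Bool)
    (h : (p k).1 v = some b) : (p k').1 v = some b := by
  obtain ⟨d, rfl⟩ := Nat.exists_eq_add_of_le hk
  induction d with
  | zero => exact h
  | succ d ih => exact TAYG.mono_step hplay (k + d) v b (ih (Nat.le_add_right k d))

/-- The number of unassigned nodes at time `k`. -/
noncomputable def TAYG.u (p : ℕ → TAYGState V) (k : ℕ) : ℕ :=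
  (Finset.univ.filter fun v => (p k).1 v = none).card

lemma TAYG.none_subset (hplay : TAYGPlay E σ τ p) {k k' : ℕ} (hk : k ≤ k') :
    (Finset.univ.filter fun v => (p k').1 v = none) ⊆
      (Finset.univ.filter fun v => (p k).1 v = none) := by
  intro v hv
  simp only [Finset.mem_filter, Finset.mem_univ, true_and] at hv ⊢
  cases h : (p k).1 v with
  | none => rfl
  | some b => exact absurd (TAYG.mono hplay hk v b h) (by rw [hv]; simp)

lemma TAYG.u_anti (hplay : TAYGPlay E σ τ p) {k k' : ℕ} (hk : k ≤ k') :
    TAYG.u p k' ≤ TAYG.u p k :=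
  Finset.card_le_card (TAYG.none_subset hplay hk)

/-- If the unassigned counts agree, the ownership functions agree. -/
lemma TAYG.own_eq (hplay : TAYGPlay E σ τ p) {k k' : ℕ} (hu : TAYG.u p k = TAYG.u p k') :
    (p k).1 = (p k').1 := by
  -- wlog k ≤ k'
  suffices H : ∀ a a' : ℕ, a ≤ a' → TAYG.u p a = TAYG.u p a' → (p a).1 = (p a').1 by
    rcases le_total k k' with h | h
    · exact H k k' h hu
    · exact (H k' k h hu.symm).symm
  intro a a' ha hu
  have hsub := TAYG.none_subset hplay ha
  have hsets : (Finset.univ.filter fun v => (p a').1 v = none) =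
      (Finset.univ.filter fun v => (p a).1 v = none) :=
    Finset.eq_of_subset_of_card_le hsub (le_of_eq hu)
  funext v
  cases h : (p a).1 v with
  | none =>
    have hv : v ∈ (Finset.univ.filter fun w => (p a).1 w = none) := by
      simp [h]
    rw [← hsets] at hv
    simp only [Finset.mem_filter, Finset.mem_univ, true_and] at hv
    rw [hv]
  | some b => exact (TAYG.mono hplay ha v b h).symm

/-- A coin toss strictly decreases the number of unassigned nodes. -/
lemma TAYG.u_toss (hplay : TAYGPlay E σ τ p) (k : ℕ) (h : (p k).1 (p k).2 = none) :
    TAYG.u p (k + 1) < TAYG.u p k := by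
  rcases hplay k with ⟨hn, b, hb⟩ | ⟨hs, _⟩ | ⟨hs, _⟩
  · have hset : (Finset.univ.filter fun v => (p (k + 1)).1 v = none) =
        (Finset.univ.filter fun v => (p k).1 v = none).erase (p k).2 := by
      ext v
      rw [hb]
      by_cases hv : v = (p k).2
      · subst hv; simp [Function.update_self]
      · simp [Function.update_of_ne hv, hv]
    have hmem : (p k).2 ∈ (Finset.univ.filter fun v => (p k).1 v = none) := by simp [hn]
    rw [TAYG.u, TAYG.u, hset, Finset.card_erase_of_mem hmem]
    have : 0 < (Finset.univ.filter fun v => (p k).1 v = none).card :=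
      Finset.card_pos.mpr ⟨(p k).2, hmem⟩
    omega
  · rw [h] at hs; exact absurd hs (by simp)
  · rw [h] at hs; exact absurd hs (by simp)

end Aux

/-- Path-length bound for toss-as-you-go games (items (e),(f) of the paper's lemma): if both
players play memoryless strategies (in particular, the optimal memoryless strategies) on a
graph with `n` nodes and `m` nodes are unassigned at the start, then the first cycle is closed
— i.e. an explicit-game state repeats — within `Σ_{i=0}^{m} (n − i + 1)` steps, and since
`m ≤ n` this bound is at most `(n+1)(n+2)/2`. -/
theorem toss_as_you_go_cycle_bound {V : Type} [Fintype V] [DecidableEq V]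
    (E : V → V → Prop) (hE : ∀ v, ∃ w, E v w)
    (σ τ : TAYGState V → V) (hσ : ∀ s, E s.2 (σ s)) (hτ : ∀ s, E s.2 (τ s))
    (own₀ : V → Option Bool) (v₀ : V)
    (p : ℕ → TAYGState V) (h0 : p 0 = (own₀, v₀)) (hplay : TAYGPlay E σ τ p) :
    (∃ i j, i < j ∧
        j ≤ ∑ i ∈ Finset.range ((Finset.univ.filter fun v => own₀ v = none).card + 1),
              (Fintype.card V - i + 1) ∧
        p i = p j) ∧
      ∑ i ∈ Finset.range ((Finset.univ.filter fun v => own₀ v = none).card + 1),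
          (Fintype.card V - i + 1)
        ≤ (Fintype.card V + 1) * (Fintype.card V + 2) / 2 := by
  set n := Fintype.card V with hn
  set m := (Finset.univ.filter fun v => own₀ v = none).card with hm
  set S := ∑ i ∈ Finset.range (m + 1), (n - i + 1) with hS
  have hu0 : TAYG.u p 0 = m := by
    rw [TAYG.u, hm, h0]
  have hum : ∀ k, TAYG.u p k ≤ m := fun k => hu0 ▸ TAYG.u_anti hplay (Nat.zero_le k)
  constructor
  · -- pigeonhole: a state repeats within S steps
    by_contra hno
    push_neg at hno
    -- p is injective on range (S+1)
    have hinj : ∀ i ∈ Finset.range (S + 1), ∀ j ∈ Finset.range (S + 1),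
        p i = p j → i = j := by
      intro i hi j hj hp
      by_contra hne
      rcases Nat.lt_or_ge i j with hlt | hge
      · exact hno i j hlt (by simpa using Nat.lt_succ_iff.mp (Finset.mem_range.mp hj)) hp
      · have hlt : j < i := lt_of_le_of_ne hge (Ne.symm hne)
        exact hno j i hlt (by simpa using Nat.lt_succ_iff.mp (Finset.mem_range.mp hi)) hp.symm
    -- count by fibers of u
    have hcard : (Finset.range (S + 1)).card =
        ∑ j ∈ Finset.range (m + 1),
          ((Finset.range (S + 1)).filter fun k => TAYG.u p k = j).card := by
      apply Finset.card_eq_sum_card_fiberwise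
      intro k _
      exact Finset.mem_range.mpr (Nat.lt_succ_of_le (hum k))
    have hfiber : ∀ j ∈ Finset.range (m + 1),
        ((Finset.range (S + 1)).filter fun k => TAYG.u p k = j).card ≤ n - j + 1 := by
      intro j _
      set B := (Finset.range (S + 1)).filter fun k => TAYG.u p k = j with hB
      rcases B.eq_empty_or_nonempty with hBe | ⟨k₀, hk₀⟩
      · rw [hBe]; simp
      have hk₀u : TAYG.u p k₀ = j := (Finset.mem_filter.mp hk₀).2
      -- target finset
      set T : Finset (Option V) :=
        insert none ((Finset.univ.filter fun v => (p k₀).1 v ≠ none).image some) with hT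
      have hTcard : T.card ≤ n - j + 1 := by
        have h1 : ((Finset.univ.filter fun v => (p k₀).1 v ≠ none).image some).card =
            (Finset.univ.filter fun v => (p k₀).1 v ≠ none).card :=
          Finset.card_image_of_injective _ (Option.some_injective V)
        have h3 : (Finset.univ.filter fun v => (p k₀).1 v ≠ none).card = n - j := by
          have hj : (Finset.univ.filter fun v => (p k₀).1 v = none).card = j := by
            simpa [TAYG.u] using hk₀u
          have hcompl : (Finset.univ.filter fun v => (p k₀).1 v ≠ none) =
              Finset.univ \ (Finset.univ.filter fun v => (p k₀).1 v = none) := by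
            ext v; simp
          rw [hcompl, Finset.card_sdiff_of_subset (Finset.filter_subset _ _), Finset.card_univ, hj]
        calc T.card ≤ ((Finset.univ.filter fun v => (p k₀).1 v ≠ none).image some).card + 1 :=
              Finset.card_insert_le _ _
          _ = n - j + 1 := by rw [h1, h3]
      -- the injection
      have hBT : B.card ≤ T.card := by
        apply Finset.card_le_card_of_injOn
          (fun k => if (p k).1 (p k).2 = none then (none : Option V) else some (p k).2)
        · intro k hk
          by_cases hc : (p k).1 (p k).2 = none
          · simp [hc, hT]
          · have hku : TAYG.u p k = j := (Finset.mem_filter.mp hk).2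
            have hown : (p k₀).1 = (p k).1 := TAYG.own_eq hplay (by rw [hk₀u, hku])
            simp only [hc, if_neg, if_false, Finset.mem_coe, hT, Finset.mem_insert, Finset.mem_image,
              Finset.mem_filter, Finset.mem_univ, true_and]
            right
            exact ⟨(p k).2, by rw [hown]; exact hc, rfl⟩
        · -- injectivity
          have key : ∀ k ∈ B, ∀ k' ∈ B, k ≤ k' →
              (if (p k).1 (p k).2 = none then (none : Option V) else some (p k).2) =
              (if (p k').1 (p k').2 = none then (none : Option V) else some (p k').2) →
              k = k' := by
            intro k hk k' hk' hle heq
            have hku : TAYG.u p k = j := (Finset.mem_filter.mp hk).2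
            have hk'u : TAYG.u p k' = j := (Finset.mem_filter.mp hk').2
            by_cases hc : (p k).1 (p k).2 = none
            · by_cases hc' : (p k').1 (p k').2 = none
              · -- both tosses: a toss decrements u
                by_contra hne
                have hlt : k < k' := lt_of_le_of_ne hle hne
                have h1 : TAYG.u p (k + 1) < TAYG.u p k := TAYG.u_toss hplay k hc
                have h2 : TAYG.u p k' ≤ TAYG.u p (k + 1) := TAYG.u_anti hplay hlt
                omega
              · simp [hc, hc'] at heq
            · by_cases hc' : (p k').1 (p k').2 = none
              · simp [hc, hc'] at heq
              · simp only [hc, hc', if_neg, not_false_iff] at heq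
                have hnode : (p k).2 = (p k').2 := Option.some_injective V heq
                have hown : (p k).1 = (p k').1 := TAYG.own_eq hplay (by rw [hku, hk'u])
                have hpeq : p k = p k' := Prod.ext hown hnode
                exact hinj k (Finset.mem_filter.mp hk).1 k' (Finset.mem_filter.mp hk').1 hpeq
          intro k hk k' hk' heq
          rcases le_total k k' with h | h
          · exact key k hk k' hk' h heq
          · exact (key k' hk' k hk h heq.symm).symm
      exact hBT.trans hTcard
    have : S + 1 ≤ S := by
      calc S + 1 = (Finset.range (S + 1)).card := (Finset.card_range _).symm
        _ = ∑ j ∈ Finset.range (m + 1),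
              ((Finset.range (S + 1)).filter fun k => TAYG.u p k = j).card := hcard
        _ ≤ ∑ j ∈ Finset.range (m + 1), (n - j + 1) := Finset.sum_le_sum hfiber
        _ = S := hS.symm
    omega
  · -- the numeric bound
    have hmn : m ≤ n := by
      rw [hm, hn, ← Finset.card_univ]
      exact Finset.card_filter_le _ _
    have h1 : S ≤ ∑ i ∈ Finset.range (n + 1), (n - i + 1) := by
      rw [hS]
      apply Finset.sum_le_sum_of_subset
      exact Finset.range_subset_range.mpr (by omega)
    have h2 : ∑ i ∈ Finset.range (n + 1), (n - i + 1) =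
        ∑ i ∈ Finset.range (n + 1), (i + 1) := by
      rw [← Finset.sum_range_reflect]
      apply Finset.sum_congr rfl
      intro i hi
      have : i < n + 1 := Finset.mem_range.mp hi
      omega
    have h3 : ∑ i ∈ Finset.range (n + 1), (i + 1) = ∑ i ∈ Finset.range (n + 2), i := by
      rw [Finset.sum_range_succ' (fun i => i) (n + 1)]
      simp
    have h4 : (∑ i ∈ Finset.range (n + 2), i) * 2 = (n + 1) * (n + 2) := by
      rw [Finset.sum_range_id_mul_two (n + 2)]
      have : n + 2 - 1 = n + 1 := rfl
      rw [this]; ring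
    have : ∑ i ∈ Finset.range (n + 2), i = (n + 1) * (n + 2) / 2 := by omega
    calc S ≤ ∑ i ∈ Finset.range (n + 1), (n - i + 1) := h1
      _ = (n + 1) * (n + 2) / 2 := by rw [h2, h3, this]
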